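/- arXiv:1305.5531 — 13 statements merged into one kernel-verified Lean document; each statement's English description precedes it below -/
import Mathlib

section
/- Let R be a semiring, let M and N be R-semimodules and let f, g : N → M be R-linear maps. Define the relation ∼ on M by: m ∼ m' if and only if there exist n, n' ∈ N with m + f(n) + g(n') = m' + f(n') + g(n). Then ∼ is a congruence relation of R-semimodules on M, and moreover f(n) ∼ g(n) for every n ∈ N. -/
/-- For `R`-linear maps `f g : N →ₗ[R] M`, the relation
`m ∼ m' ↔ ∃ n n', m + f n + g n' = m' + f n' + g n` is a congruence relation of
`R`-semimodules on `M` (an equivalence relation compatible with addition and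
scalar multiplication), and `f n ∼ g n` for every `n`. -/
theorem stmt0 {R M N : Type*} [Semiring R] [AddCommMonoid M] [Module R M]
    [AddCommMonoid N] [Module R N] (f g : N →ₗ[R] M)
    (r : M → M → Prop)
    (hr : ∀ m m' : M, r m m' ↔ ∃ n n' : N, m + f n + g n' = m' + f n' + g n) :
    Equivalence r ∧
    (∀ m m' p : M, r m m' → r (m + p) (m' + p)) ∧
    (∀ (c : R) (m m' : M), r m m' → r (c • m) (c • m')) ∧
    (∀ n : N, r (f n) (g n)) := by
  refine ⟨⟨?_, ?_, ?_⟩, ?_, ?_, ?_⟩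
  · intro m; exact (hr m m).2 ⟨0, 0, rfl⟩
  · intro m m' h
    obtain ⟨n, n', e⟩ := (hr m m').1 h
    exact (hr m' m).2 ⟨n', n, e.symm⟩
  · intro a b c h1 h2
    obtain ⟨n1, n1', e1⟩ := (hr a b).1 h1
    obtain ⟨n2, n2', e2⟩ := (hr b c).1 h2
    refine (hr a c).2 ⟨n1 + n2, n1' + n2', ?_⟩
    simp only [map_add]
    calc a + (f n1 + f n2) + (g n1' + g n2')
        = (a + f n1 + g n1') + f n2 + g n2' := by abel
      _ = (b + f n1' + g n1) + f n2 + g n2' := by rw [e1]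
      _ = (b + f n2 + g n2') + f n1' + g n1 := by abel
      _ = (c + f n2' + g n2) + f n1' + g n1 := by rw [e2]
      _ = c + (f n1' + f n2') + (g n1 + g n2) := by abel
  · intro m m' p h
    obtain ⟨n, n', e⟩ := (hr m m').1 h
    refine (hr _ _).2 ⟨n, n', ?_⟩
    calc m + p + f n + g n' = (m + f n + g n') + p := by abel
      _ = (m' + f n' + g n) + p := by rw [e]
      _ = m' + p + f n' + g n := by abel
  · intro c m m' h
    obtain ⟨n, n', e⟩ := (hr m m').1 h
    refine (hr _ _).2 ⟨c • n, c • n', ?_⟩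
    simp only [map_smul, ← smul_add, e]
  · intro n
    refine (hr _ _).2 ⟨0, n, ?_⟩
    simp only [map_zero]
    abel
end

section
/- Let R be a semiring, let M and N be R-semimodules and let f, g : N → M be R-linear maps. Define the one-step relation S on M by: S m m' if and only if there exist m₁ ∈ M and n, n' ∈ N with m = m₁ + f(n) + g(n') and m' = m₁ + f(n') + g(n). Then the reflexive–transitive closure of S is symmetric, hence an equivalence relation, and is a congruence relation of R-semimodules on M. -/
/-- For `R`-linear maps `f g : N →ₗ[R] M`, the reflexive-transitive
closure of the one-step relation
`S m m' ↔ ∃ m₁ n n', m = m₁ + f n + g n' ∧ m' = m₁ + f n' + g n`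
is symmetric, hence an equivalence relation, and is a congruence relation of
`R`-semimodules on `M`. -/
theorem stmt1 {R M N : Type*} [Semiring R] [AddCommMonoid M] [Module R M]
    [AddCommMonoid N] [Module R N] (f g : N →ₗ[R] M)
    (S : M → M → Prop)
    (hS : ∀ m m' : M, S m m' ↔ ∃ (m₁ : M) (n n' : N),
        m = m₁ + f n + g n' ∧ m' = m₁ + f n' + g n) :
    (∀ m m' : M, Relation.ReflTransGen S m m' → Relation.ReflTransGen S m' m) ∧
    Equivalence (Relation.ReflTransGen S) ∧
    (∀ m m' p : M, Relation.ReflTransGen S m m' →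
      Relation.ReflTransGen S (m + p) (m' + p)) ∧
    (∀ (c : R) (m m' : M), Relation.ReflTransGen S m m' →
      Relation.ReflTransGen S (c • m) (c • m')) := by
  have hsymm : ∀ m m' : M, S m m' → S m' m := by
    intro m m' h
    rw [hS] at h ⊢
    obtain ⟨m₁, n, n', h1, h2⟩ := h
    exact ⟨m₁, n', n, h2, h1⟩
  have sym : ∀ m m' : M, Relation.ReflTransGen S m m' →
      Relation.ReflTransGen S m' m := by
    intro m m' h
    induction h with
    | refl => exact Relation.ReflTransGen.refl
    | tail _ hstep ih =>
        exact Relation.ReflTransGen.head (hsymm _ _ hstep) ih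
  refine ⟨sym, ⟨fun _ => Relation.ReflTransGen.refl, fun h => sym _ _ h,
      fun h1 h2 => h1.trans h2⟩, ?_, ?_⟩
  · intro m m' p h
    induction h with
    | refl => exact Relation.ReflTransGen.refl
    | tail _ hstep ih =>
        refine ih.tail ?_
        rw [hS] at hstep ⊢
        obtain ⟨m₁, n, n', h1, h2⟩ := hstep
        exact ⟨m₁ + p, n, n', by rw [h1]; abel, by rw [h2]; abel⟩
  · intro c m m' h
    induction h with
    | refl => exact Relation.ReflTransGen.refl
    | tail _ hstep ih =>
        refine ih.tail ?_
        rw [hS] at hstep ⊢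
        obtain ⟨m₁, n, n', h1, h2⟩ := hstep
        exact ⟨c • m₁, c • n, c • n', by rw [h1]; simp [smul_add], by rw [h2]; simp [smul_add]⟩
end

section
/- Let R be a semiring, let M and N be R-semimodules and let f, g : N → M be R-linear maps, and let ∼₍f,g₎ be the associated chain congruence on M. Then: (1) f(n) ∼₍f,g₎ g(n) for every n ∈ N; (2) for every R-semimodule P and every R-linear map h : M → P with h ∘ f = h ∘ g, if m ∼₍f,g₎ m' then h(m) = h(m'). (Consequently the quotient of M by ∼₍f,g₎ is a coequalizer of f and g in the category of R-semimodules.) -/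
universe u v w x

/-- For `R`-linear maps `f g : N →ₗ[R] M` and the chain congruence
`∼₍f,g₎` (the reflexive-transitive closure of the one-step relation `S`):
(1) `f n ∼₍f,g₎ g n` for every `n`;
(2) for every `R`-semimodule `P` and every `R`-linear `h : M →ₗ[R] P` with
`h ∘ f = h ∘ g`, `m ∼₍f,g₎ m'` implies `h m = h m'`. -/
theorem stmt2 {R : Type u} {M : Type v} {N : Type w} [Semiring R]
    [AddCommMonoid M] [Module R M] [AddCommMonoid N] [Module R N]
    (f g : N →ₗ[R] M)
    (S : M → M → Prop)
    (hS : ∀ m m' : M, S m m' ↔ ∃ (m₁ : M) (n n' : N),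
        m = m₁ + f n + g n' ∧ m' = m₁ + f n' + g n) :
    (∀ n : N, Relation.ReflTransGen S (f n) (g n)) ∧
    (∀ (P : Type x) [AddCommMonoid P] [Module R P] (h : M →ₗ[R] P),
      (∀ n : N, h (f n) = h (g n)) →
      ∀ m m' : M, Relation.ReflTransGen S m m' → h m = h m') := by
  constructor
  · intro n
    refine Relation.ReflTransGen.single ?_
    rw [hS]
    exact ⟨0, n, 0, by simp, by simp⟩
  · intro P _ _ h hfg m m' hrel
    induction hrel with
    | refl => rfl
    | tail _ hstep ih =>
      rw [ih]
      obtain ⟨m₁, n, n', h1, h2⟩ := (hS _ _).1 hstep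
      rw [h1, h2]
      simp [map_add, hfg n, hfg n']
      abel
end

section
/- Let R be a semiring, let M and N be R-semimodules and let f, g : N → M be R-linear maps. Then for all m, m' ∈ M: m ∼₍f,g₎ m' holds if and only if h(m) = h(m') for every R-semimodule P and every R-linear map h : M → P satisfying h ∘ f = h ∘ g. That is, the chain congruence ∼₍f,g₎ coincides with the congruence ∼₍⟨f,g⟩₎ defined by separating homomorphisms. -/
universe u v w

section Aux

variable (R : Type u) {M : Type v} [Semiring R] [AddCommMonoid M] [Module R M]

/-- A relation on a semimodule which is an equivalence compatible with addition
and scalar multiplication. -/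
structure IsModRel (r : M → M → Prop) : Prop where
  refl : ∀ m, r m m
  symm : ∀ {a b}, r a b → r b a
  trans : ∀ {a b c}, r a b → r b c → r a c
  add_right : ∀ {a b} (c : M), r a b → r (a + c) (b + c)
  smul : ∀ (s : R) {a b}, r a b → r (s • a) (s • b)

variable {R} {r : M → M → Prop}

def IsModRel.setoid (hr : IsModRel R r) : Setoid M :=
  ⟨r, ⟨hr.refl, hr.symm, hr.trans⟩⟩

theorem IsModRel.add_cong (hr : IsModRel R r) {a a' b b' : M}
    (ha : r a a') (hb : r b b') : r (a + b) (a' + b') := by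
  refine hr.trans (hr.add_right b ha) ?_
  rw [add_comm a' b, add_comm a' b']
  exact hr.add_right a' hb

def IsModRel.Q (hr : IsModRel R r) : Type v := Quotient hr.setoid

def IsModRel.proj (hr : IsModRel R r) (a : M) : hr.Q := Quotient.mk hr.setoid a

theorem IsModRel.proj_eq (hr : IsModRel R r) {a b : M} :
    hr.proj a = hr.proj b ↔ r a b :=
  ⟨fun h => @Quotient.exact _ hr.setoid _ _ h, fun h => Quotient.sound h⟩

def IsModRel.qAdd (hr : IsModRel R r) : hr.Q → hr.Q → hr.Q :=
  Quotient.map₂ (· + ·) (fun _ _ ha _ _ hb => hr.add_cong ha hb)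

def IsModRel.qSMul (hr : IsModRel R r) (s : R) : hr.Q → hr.Q :=
  Quotient.map (s • ·) (fun _ _ ha => hr.smul s ha)

theorem IsModRel.proj_add (hr : IsModRel R r) (a b : M) :
    hr.qAdd (hr.proj a) (hr.proj b) = hr.proj (a + b) := rfl

theorem IsModRel.proj_smul (hr : IsModRel R r) (s : R) (a : M) :
    hr.qSMul s (hr.proj a) = hr.proj (s • a) := rfl

def IsModRel.qAddCommMonoid (hr : IsModRel R r) : AddCommMonoid hr.Q :=
  letI : Zero hr.Q := ⟨hr.proj 0⟩
  letI : Add hr.Q := ⟨hr.qAdd⟩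
  { add_assoc := by
      rintro ⟨a⟩ ⟨b⟩ ⟨c⟩
      exact congrArg hr.proj (add_assoc a b c)
    zero_add := by rintro ⟨a⟩; exact congrArg hr.proj (zero_add a)
    add_zero := by rintro ⟨a⟩; exact congrArg hr.proj (add_zero a)
    add_comm := by rintro ⟨a⟩ ⟨b⟩; exact congrArg hr.proj (add_comm a b)
    nsmul := nsmulRec }

def IsModRel.qModule (hr : IsModRel R r) :
    letI := hr.qAddCommMonoid; Module R hr.Q :=
  letI := hr.qAddCommMonoid
  { smul := hr.qSMul
    one_smul := by rintro ⟨a⟩; exact congrArg hr.proj (one_smul R a)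
    mul_smul := by
      rintro s t ⟨a⟩; exact congrArg hr.proj (mul_smul s t a)
    smul_zero := fun s => congrArg hr.proj (smul_zero s)
    smul_add := by
      rintro s ⟨a⟩ ⟨b⟩; exact congrArg hr.proj (smul_add s a b)
    add_smul := by
      rintro s t ⟨a⟩; exact congrArg hr.proj (add_smul s t a)
    zero_smul := by rintro ⟨a⟩; exact congrArg hr.proj (zero_smul R a) }

def IsModRel.projHom (hr : IsModRel R r) :
    letI := hr.qAddCommMonoid; letI := hr.qModule; M →ₗ[R] hr.Q :=
  letI := hr.qAddCommMonoid
  letI := hr.qModule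
  { toFun := hr.proj
    map_add' := fun _ _ => rfl
    map_smul' := fun _ _ => rfl }

end Aux

/-- The chain congruence `∼₍f,g₎` (reflexive-transitive closure of
the one-step relation `S`) coincides with the congruence `∼₍⟨f,g⟩₎` defined by
separating homomorphisms: `m ∼₍f,g₎ m'` iff `h m = h m'` for every
`R`-semimodule `P` and every `R`-linear `h : M →ₗ[R] P` with `h ∘ f = h ∘ g`. -/
theorem stmt3 {R : Type u} {M : Type v} {N : Type w} [Semiring R]
    [AddCommMonoid M] [Module R M] [AddCommMonoid N] [Module R N]
    (f g : N →ₗ[R] M)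
    (S : M → M → Prop)
    (hS : ∀ m m' : M, S m m' ↔ ∃ (m₁ : M) (n n' : N),
        m = m₁ + f n + g n' ∧ m' = m₁ + f n' + g n)
    (m m' : M) :
    Relation.ReflTransGen S m m' ↔
      ∀ (P : Type v) [AddCommMonoid P] [Module R P] (h : M →ₗ[R] P),
        (∀ n : N, h (f n) = h (g n)) → h m = h m' := by
  have Ssymm : ∀ {a b : M}, S a b → S b a := by
    intro a b hab
    obtain ⟨m₁, n, n', h1, h2⟩ := (hS a b).1 hab
    exact (hS b a).2 ⟨m₁, n', n, h2, h1⟩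
  constructor
  · intro hrel P _ _ h hfg
    induction hrel with
    | refl => rfl
    | tail _ hstep ih =>
      obtain ⟨m₁, n, n', h1, h2⟩ := (hS _ _).1 hstep
      rw [ih, h1, h2]
      simp only [map_add, hfg n, hfg n']
      rw [add_assoc, add_assoc, add_comm (h (g n)) (h (g n'))]
  · intro hP
    set r : M → M → Prop := Relation.ReflTransGen S with hr_def
    have hr : IsModRel R r := by
      constructor
      · intro a; exact Relation.ReflTransGen.refl
      · intro a b hab
        induction hab with
        | refl => exact Relation.ReflTransGen.refl
        | tail _ hstep ih =>
          exact Relation.ReflTransGen.trans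
            (Relation.ReflTransGen.single (Ssymm hstep)) ih
      · intro a b c hab hbc; exact hab.trans hbc
      · intro a b c hab
        refine Relation.ReflTransGen.lift (· + c) ?_ _ _ hab
        intro x y hxy
        obtain ⟨m₁, n, n', h1, h2⟩ := (hS x y).1 hxy
        refine (hS _ _).2 ⟨m₁ + c, n, n', ?_, ?_⟩
        · rw [h1]; abel_nf
        · rw [h2]; abel_nf
      · intro s a b hab
        refine Relation.ReflTransGen.lift (s • ·) ?_ _ _ hab
        intro x y hxy
        obtain ⟨m₁, n, n', h1, h2⟩ := (hS x y).1 hxy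
        refine (hS _ _).2 ⟨s • m₁, s • n, s • n', ?_, ?_⟩
        · rw [h1]; simp [smul_add]
        · rw [h2]; simp [smul_add]
    letI := hr.qAddCommMonoid
    letI := hr.qModule
    have key := hP hr.Q hr.projHom ?_
    · exact hr.proj_eq.1 key
    · intro n
      refine hr.proj_eq.2 ?_
      refine Relation.ReflTransGen.single ((hS _ _).2 ⟨0, n, 0, ?_, ?_⟩)
      · simp
      · simp
end

section
/- Consider the two additive monoid homomorphisms f, g : ℕ → ℕ given by f(n) = 4n and g(n) = 6n. Then (1) there exist n, n' ∈ ℕ with 0 + 4n + 6n' = 2 + 4n' + 6n (so 0 and 2 are related under the relation ∼₍[f,g]₎ of one-step witnesses), but (2) there exists an additive commutative monoid P and an additive monoid homomorphism h : ℕ → P with h(4n) = h(6n) for all n ∈ ℕ and h(0) ≠ h(2); in particular 0 and 2 are not identified in the coequalizer of f and g, so ∼₍[f,g]₎ is not the coequalizer congruence. -/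
/-- For the homomorphisms `f n = 4 * n` and `g n = 6 * n` on `ℕ`:
(1) `0 ∼₍[f,g]₎ 2`, i.e. there are `n n'` with `0 + 4n + 6n' = 2 + 4n' + 6n`;
(2) yet there is a commutative monoid `P` and an additive monoid homomorphism
`h : ℕ →+ P` with `h (4n) = h (6n)` for all `n` and `h 0 ≠ h 2`; so `0` and `2`
are not identified in the coequalizer of `f` and `g`, and `∼₍[f,g]₎` is not the
coequalizer congruence. -/
theorem stmt4 :
    (∃ n n' : ℕ, 0 + 4 * n + 6 * n' = 2 + 4 * n' + 6 * n) ∧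
    (∃ (P : Type) (_ : AddCommMonoid P) (h : ℕ →+ P),
      (∀ n : ℕ, h (4 * n) = h (6 * n)) ∧ h 0 ≠ h 2) := by
  constructor
  · exact ⟨2, 3, by norm_num⟩
  · refine ⟨Additive (ZMod 8), inferInstance,
      multiplesHom (Additive (ZMod 8)) (Additive.ofMul (2 : ZMod 8)), ?_, ?_⟩
    · intro n
      show (4 * n) • Additive.ofMul (2 : ZMod 8) = (6 * n) • Additive.ofMul (2 : ZMod 8)
      apply Additive.toMul.injective
      show (2 : ZMod 8) ^ (4 * n) = (2 : ZMod 8) ^ (6 * n)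
      rw [pow_mul, pow_mul]
      exact congrArg (· ^ n) (by decide : (2 : ZMod 8) ^ 4 = (2 : ZMod 8) ^ 6)
    · intro hc
      have : (2 : ZMod 8) ^ 0 = (2 : ZMod 8) ^ 2 := congrArg Additive.toMul (hc :
        (0 • Additive.ofMul (2 : ZMod 8)) = 2 • Additive.ofMul (2 : ZMod 8))
      revert this
      decide
end

section
/- Let M be an additive submonoid of ℕ and let d be the period of M, i.e. d > 0, d is a difference of M, and d ≤ e for every difference e > 0 of M. If a ∈ M, a ≠ 0 and a + d ∈ M, then d divides a. -/
/-- Let `d` be the period of the additive submonoid `M` of `ℕ`,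
i.e. the least positive difference of `M`. If `a ∈ M`, `a ≠ 0` and
`a + d ∈ M`, then `d` divides `a`. -/
theorem stmt11 (M : AddSubmonoid ℕ) (d : ℕ) (hd0 : 0 < d)
    (hdiff : ∃ a ∈ M, a ≠ 0 ∧ a + d ∈ M)
    (hmin : ∀ e : ℕ, 0 < e → (∃ a ∈ M, a ≠ 0 ∧ a + e ∈ M) → d ≤ e)
    (a : ℕ) (ha : a ∈ M) (ha0 : a ≠ 0) (had : a + d ∈ M) :
    d ∣ a := by
  by_contra hnd
  set r := a % d with hr
  set q := a / d with hq
  have hdm : d * q + r = a := Nat.div_add_mod a d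
  have hr0 : r ≠ 0 := fun h => hnd (Nat.dvd_of_mod_eq_zero h)
  have hrlt : r < d := Nat.mod_lt _ hd0
  rcases Nat.eq_zero_or_pos q with hq0 | hq1
  · -- then a = r < d, but a is a positive difference
    have hle := hmin a (Nat.pos_of_ne_zero ha0) ⟨a, ha, ha0, M.add_mem ha ha⟩
    rw [hq0, Nat.mul_zero] at hdm
    omega
  · have key : q * (a + d) + r = (q + 1) * a := by
      calc q * (a + d) + r = q * a + (d * q + r) := by ring
        _ = q * a + a := by rw [hdm]
        _ = (q + 1) * a := by ring
    have hm1 : q * (a + d) ∈ M := by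
      simpa [smul_eq_mul] using M.nsmul_mem had q
    have hm2 : (q + 1) * a ∈ M := by
      simpa [smul_eq_mul] using M.nsmul_mem ha (q + 1)
    have hne : q * (a + d) ≠ 0 :=
      Nat.mul_ne_zero (by omega) (by omega)
    have hle := hmin r (Nat.pos_of_ne_zero hr0)
      ⟨q * (a + d), hm1, hne, key ▸ hm2⟩
    omega
end

section
/- Let M be a nonzero additive submonoid of ℕ with period d. Then there exists c ∈ M with c ≠ 0 such that for every natural number c': (c' ∈ M and c ≤ c') holds if and only if c' = c + n·d for some n ∈ ℕ. In particular there is a least such c (called the footing of M). -/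
/-- Let `M` be a nonzero additive submonoid of `ℕ` with period
`d` (the least positive difference of `M`). Then there is `c ∈ M`, `c ≠ 0`,
such that for every `c'`: `c' ∈ M ∧ c ≤ c'` iff `c' = c + n * d` for some `n`;
and there is a least such `c` (the footing of `M`). -/
theorem stmt12 (M : AddSubmonoid ℕ) (hM : M ≠ ⊥) (d : ℕ) (hd0 : 0 < d)
    (hdiff : ∃ a ∈ M, a ≠ 0 ∧ a + d ∈ M)
    (hmin : ∀ e : ℕ, 0 < e → (∃ a ∈ M, a ≠ 0 ∧ a + e ∈ M) → d ≤ e) :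
    ∃ c ∈ M, c ≠ 0 ∧
      (∀ c' : ℕ, (c' ∈ M ∧ c ≤ c') ↔ ∃ n : ℕ, c' = c + n * d) ∧
      (∀ c'' ∈ M, c'' ≠ 0 →
        (∀ c' : ℕ, (c' ∈ M ∧ c'' ≤ c') ↔ ∃ n : ℕ, c' = c'' + n * d) →
        c ≤ c'') := by
  classical
  obtain ⟨a, haM, ha0, had⟩ := hdiff
  have mulmem : ∀ (k x : ℕ), x ∈ M → k * x ∈ M := by
    intro k x hx
    simpa [nsmul_eq_mul] using M.nsmul_mem hx k
  -- every difference is divisible by d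
  have hdvd : ∀ b, b ∈ M → b ≠ 0 → ∀ e, b + e ∈ M → d ∣ e := by
    intro b hb hb0 e he
    rcases Nat.eq_zero_or_pos (e % d) with h | h
    · exact Nat.dvd_of_mod_eq_zero h
    · exfalso
      have hq := Nat.div_add_mod e d
      set q := e / d with hqdef
      set r := e % d with hrdef
      have h2 : q * (a + d) = q * a + q * d := Nat.mul_add q a d
      have hx : b + q * (a + d) ∈ M := M.add_mem hb (mulmem q _ had)
      have hx' : b + q * (a + d) + r ∈ M := by
        have h3 : d * q = q * d := Nat.mul_comm d q
        have heq : b + q * (a + d) + r = (b + e) + q * a := by omega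
        rw [heq]
        exact M.add_mem he (mulmem q _ haM)
      have hle : d ≤ r := hmin r h ⟨b + q * (a + d), hx, by omega, hx'⟩
      have : r < d := Nat.mod_lt _ hd0
      omega
  -- the arithmetic progression starting at a*a is in M
  have key : ∀ n : ℕ, a * a + n * d ∈ M := by
    intro n
    obtain ⟨q, r, hr, hn⟩ : ∃ q r, r < a ∧ n = q * a + r :=
      ⟨n / a, n % a, Nat.mod_lt _ (Nat.pos_of_ne_zero ha0), by rw [Nat.mul_comm]; exact (Nat.div_add_mod n a).symm⟩
    obtain ⟨s, hs⟩ : ∃ s, a = s + r := ⟨a - r, by omega⟩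
    have heq : a * a + n * d = s * a + r * (a + d) + (q * d) * a := by
      subst hn
      rw [hs]; ring
    rw [heq]
    exact M.add_mem (M.add_mem (mulmem s _ haM) (mulmem r _ had)) (mulmem (q * d) _ haM)
  -- the predicate
  set P : ℕ → Prop := fun c => c ∈ M ∧ c ≠ 0 ∧
      ∀ c' : ℕ, (c' ∈ M ∧ c ≤ c') ↔ ∃ n : ℕ, c' = c + n * d with hP
  have hPa : P (a * a) := by
    refine ⟨by simpa using key 0, by positivity, fun c' => ?_⟩
    constructor
    · rintro ⟨hc'M, hc'le⟩
      have hmem : a * a + (c' - a * a) ∈ M := by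
        have : a * a + (c' - a * a) = c' := by omega
        rw [this]; exact hc'M
      obtain ⟨k, hk⟩ := hdvd (a * a) (by simpa using key 0) (by positivity) _ hmem
      have : d * k = k * d := Nat.mul_comm d k
      exact ⟨k, by omega⟩
    · rintro ⟨n, rfl⟩
      exact ⟨key n, Nat.le_add_right _ _⟩
  have hEx : ∃ c, P c := ⟨a * a, hPa⟩
  obtain ⟨hcM, hc0, hciff⟩ : P (Nat.find hEx) := Nat.find_spec hEx
  exact ⟨Nat.find hEx, hcM, hc0, hciff,
    fun c'' hc''M hc''0 hiff => Nat.find_min' hEx ⟨hc''M, hc''0, hiff⟩⟩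
end

section
/- Let M be a nonzero additive submonoid of ℕ with period d. Then d divides every element of M, and d is the greatest common divisor of the elements of M: any natural number e that divides every element of M also divides d. -/
/-- Let `M` be a nonzero additive submonoid of `ℕ` with period
`d` (the least positive difference of `M`). Then `d` divides every element of
`M` and `d` is the greatest common divisor of the elements of `M`: every `e`
dividing all elements of `M` divides `d`. -/
theorem stmt13 (M : AddSubmonoid ℕ) (hM : M ≠ ⊥) (d : ℕ) (hd0 : 0 < d)
    (hdiff : ∃ a ∈ M, a ≠ 0 ∧ a + d ∈ M)
    (hmin : ∀ e : ℕ, 0 < e → (∃ a ∈ M, a ≠ 0 ∧ a + e ∈ M) → d ≤ e) :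
    (∀ m ∈ M, d ∣ m) ∧ (∀ e : ℕ, (∀ m ∈ M, e ∣ m) → e ∣ d) := by
  obtain ⟨a, haM, ha0, hadM⟩ := hdiff
  constructor
  · intro m hm
    by_contra hnd
    set r := m % d with hr
    set q := m / d with hq
    have hr0 : 0 < r := Nat.pos_of_ne_zero fun h0 => hnd (Nat.dvd_of_mod_eq_zero h0)
    have hrd : r < d := Nat.mod_lt _ hd0
    have hqd : d * q + r = m := Nat.div_add_mod m d
    have hxM : (q + 1) * a + q * d ∈ M := by
      have h1 : q • (a + d) ∈ M := AddSubmonoid.nsmul_mem M hadM q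
      have h2 : q • (a + d) + a ∈ M := M.add_mem h1 haM
      have : q • (a + d) + a = (q + 1) * a + q * d := by
        simp [smul_eq_mul]; ring
      rwa [this] at h2
    have hxrM : (q + 1) * a + q * d + r ∈ M := by
      have h1 : (q + 1) • a ∈ M := AddSubmonoid.nsmul_mem M haM (q + 1)
      have h2 : (q + 1) • a + m ∈ M := M.add_mem h1 hm
      have : (q + 1) • a + m = (q + 1) * a + q * d + r := by
        simp [smul_eq_mul, mul_comm q d]; omega
      rwa [this] at h2
    have hx0 : (q + 1) * a + q * d ≠ 0 := by
      have : 0 < a := Nat.pos_of_ne_zero ha0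
      positivity
    have := hmin r hr0 ⟨_, hxM, hx0, hxrM⟩
    omega
  · intro e he
    exact (Nat.dvd_add_right (he a haM)).mp (he (a + d) hadM)
end

section
/- Let M be a nonzero additive submonoid of ℕ, let e be the least nonzero element of M and let d be the period of M. Then there exists a finite set X ⊆ ℕ such that X generates M (the additive submonoid closure of X equals M), X is contained in every generating set of M (for every Y ⊆ ℕ whose additive submonoid closure is M, X ⊆ Y), and the cardinality of X is at most e / d. In particular X is the unique smallest generating set of M. -/
/-- Let `M` be a nonzero additive submonoid of `ℕ`, `e` its least
nonzero element and `d` its period. Then there is a finite set `X` generating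
`M`, contained in every generating set of `M`, with at most `e / d` elements;
in particular `X` is the unique smallest generating set of `M`. -/
theorem stmt14 (M : AddSubmonoid ℕ) (hM : M ≠ ⊥) (e d : ℕ)
    (he : e ∈ M) (he0 : e ≠ 0) (hemin : ∀ x ∈ M, x ≠ 0 → e ≤ x)
    (hd0 : 0 < d)
    (hdiff : ∃ a ∈ M, a ≠ 0 ∧ a + d ∈ M)
    (hmin : ∀ e' : ℕ, 0 < e' → (∃ a ∈ M, a ≠ 0 ∧ a + e' ∈ M) → d ≤ e') :
    ∃ X : Finset ℕ,
      AddSubmonoid.closure (X : Set ℕ) = M ∧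
      (∀ Y : Set ℕ, AddSubmonoid.closure Y = M → (X : Set ℕ) ⊆ Y) ∧
      X.card ≤ e / d := by
  classical
  obtain ⟨a, haM, ha0, hadM⟩ := hdiff
  have hsmul : ∀ x ∈ M, ∀ n : ℕ, n * x ∈ M := by
    intro x hx n
    simpa [nsmul_eq_mul] using M.nsmul_mem hx n
  -- d divides every element of M
  have hdvd : ∀ x ∈ M, d ∣ x := by
    intro x hx
    rcases eq_or_ne x 0 with rfl | hx0
    · exact dvd_zero d
    set g := Nat.gcd d x with hg
    have hg0 : 0 < g := Nat.gcd_pos_of_pos_left x hd0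
    have hgd : g ∣ d := Nat.gcd_dvd_left d x
    have hgx : g ∣ x := Nat.gcd_dvd_right d x
    obtain ⟨k, m, hkm⟩ : ∃ k m : ℕ, k * x = g + m * d := by
      have hb := Nat.gcd_eq_gcd_ab d x
      set p := Nat.gcdA d x with hp
      set q := Nat.gcdB d x with hq
      set t : ℤ := |q| + 1 with ht
      have ht0 : (0:ℤ) ≤ t := by positivity
      have htd : t ≤ t * d := le_mul_of_one_le_right ht0 (by exact_mod_cast hd0)
      have hk'pos : (0:ℤ) < q + t * d := by
        have := neg_abs_le q; linarith
      have heq : (x:ℤ) * (q + t * d) = g + d * (t * x - p) := by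
        rw [hg, hb]; ring
      have hxg : (g : ℤ) ≤ x := by
        exact_mod_cast Nat.le_of_dvd (Nat.pos_of_ne_zero hx0) hgx
      have hm'0 : (0:ℤ) ≤ t * x - p := by
        have hx1 : (1:ℤ) ≤ x := by
          exact_mod_cast Nat.pos_of_ne_zero hx0
        nlinarith [hk'pos, heq, hxg, (show (0:ℤ) < d by exact_mod_cast hd0)]
      refine ⟨(q + t * d).toNat, (t * x - p).toNat, ?_⟩
      have h1 := Int.toNat_of_nonneg hk'pos.le
      have h2 := Int.toNat_of_nonneg hm'0
      have : ((q + t * d).toNat : ℤ) * x = g + ((t * x - p).toNat : ℤ) * d := by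
        rw [h1, h2]; linarith [heq]
      exact_mod_cast this
    have hu : a + m * (a + d) ∈ M := M.add_mem haM (hsmul _ hadM m)
    have hv : a + m * (a + d) + g ∈ M := by
      have h : a + m * (a + d) + g = (m + 1) * a + k * x := by rw [hkm]; ring
      rw [h]
      exact M.add_mem (hsmul _ haM _) (hsmul _ hx _)
    have hdg : d ≤ g := hmin g hg0 ⟨a + m * (a + d), hu, by positivity, hv⟩
    have : g = d := le_antisymm (Nat.le_of_dvd hd0 hgd) hdg
    exact this ▸ hgx
  have hde : d ∣ e := hdvd e he
  have he0' : 0 < e := Nat.pos_of_ne_zero he0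
  set S : Set ℕ := {x | x ∈ M ∧ x ≠ 0 ∧ ∀ y ∈ M, ∀ z ∈ M, y ≠ 0 → z ≠ 0 → y + z ≠ x}
    with hSdef
  have hinj : Set.InjOn (· % e) S := by
    have key : ∀ x ∈ S, ∀ y ∈ S, x ≤ y → x % e = y % e → x = y := by
      intro x hxS y hyS hxy hmod
      obtain ⟨c, hc⟩ := (Nat.modEq_iff_dvd' hxy).mp hmod
      rcases Nat.eq_zero_or_pos c with rfl | hc0
      · omega
      · exfalso
        have hce : e * c ∈ M := by
          have := hsmul e he c
          rwa [mul_comm] at this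
        have hsum : e * c + x = y := by
          rw [(Nat.sub_eq_iff_eq_add hxy).mp hc]
        exact hyS.2.2 (e * c) hce x hxS.1 (by positivity) hxS.2.1 hsum
    intro x hx y hy hmod
    rcases le_total x y with h | h
    · exact key x hx y hy h hmod
    · exact (key y hy x hx h hmod.symm).symm
  have hfin : S.Finite := by
    apply Set.Finite.of_finite_image (f := (· % e)) ?_ hinj
    apply Set.Finite.subset (Set.finite_Iio e)
    rintro _ ⟨x, hx, rfl⟩
    exact Nat.mod_lt x he0'
  refine ⟨hfin.toFinset, ?_, ?_, ?_⟩
  · rw [Set.Finite.coe_toFinset]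
    apply le_antisymm
    · exact (AddSubmonoid.closure_le).mpr (fun x hx => hx.1)
    · intro x hx
      have hgen : ∀ n, ∀ x ∈ M, x ≤ n → x ∈ AddSubmonoid.closure S := by
        intro n
        induction n with
        | zero =>
          intro x hx hxn
          have : x = 0 := by omega
          exact this ▸ zero_mem _
        | succ n ih =>
          intro x hx hxn
          rcases eq_or_ne x 0 with rfl | hx0
          · exact zero_mem _
          by_cases hirr : ∀ y ∈ M, ∀ z ∈ M, y ≠ 0 → z ≠ 0 → y + z ≠ x
          · exact AddSubmonoid.subset_closure ⟨hx, hx0, hirr⟩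
          · push_neg at hirr
            obtain ⟨y, hyM, z, hzM, hy0, hz0, hyz⟩ := hirr
            have hy : y ≤ n := by omega
            have hz : z ≤ n := by omega
            exact hyz ▸ add_mem (ih y hyM hy) (ih z hzM hz)
      exact hgen x x hx le_rfl
  · intro Y hY x hxX
    simp only [Finset.mem_coe, Set.Finite.mem_toFinset] at hxX
    have hYM : Y ⊆ (M : Set ℕ) := by
      rw [← hY]; exact AddSubmonoid.subset_closure
    have hxcl : x ∈ AddSubmonoid.closure Y := by rw [hY]; exact hxX.1
    obtain ⟨l, hl, hsum⟩ := AddSubmonoid.exists_list_of_mem_closure hxcl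
    have hlist : ∀ l : List ℕ, (∀ y ∈ l, y ∈ Y) → l.sum = x → x ∈ Y := by
      intro l
      induction l with
      | nil =>
        intro _ hsum
        simp only [List.sum_nil] at hsum
        exact absurd hsum.symm hxX.2.1
      | cons b t ih =>
        intro hl hsum
        simp only [List.sum_cons] at hsum
        have htY : ∀ y ∈ t, y ∈ Y := fun y hy => hl y (List.mem_cons_of_mem _ hy)
        have hbY : b ∈ Y := hl b List.mem_cons_self
        have htM : t.sum ∈ M := by
          rw [← hY]
          exact AddSubmonoid.list_sum_mem _ (fun y hy => AddSubmonoid.subset_closure (htY y hy))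
        have hbM : b ∈ M := hYM hbY
        rcases eq_or_ne b 0 with rfl | hb0
        · exact ih htY (by simpa using hsum)
        rcases eq_or_ne t.sum 0 with h0 | hs0
        · have : b = x := by omega
          exact this ▸ hbY
        · exact absurd hsum (hxX.2.2 b hbM t.sum htM hb0 hs0)
    exact hlist l hl hsum
  · have hle : hfin.toFinset.card ≤ (Finset.range (e / d)).card := by
      apply Finset.card_le_card_of_injOn (fun x => (x % e) / d)
      · intro x hx
        rw [Finset.mem_coe, Set.Finite.mem_toFinset] at hx
        have hdx : d ∣ x % e := (Nat.dvd_mod_iff hde).mpr (hdvd x hx.1)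
        simp only [Finset.mem_coe, Finset.mem_range]
        have h1 : x % e < e := Nat.mod_lt _ he0'
        have h2 : d * (x % e / d) = x % e := Nat.mul_div_cancel' hdx
        have h3 : d * (e / d) = e := Nat.mul_div_cancel' hde
        by_contra hcon
        push_neg at hcon
        have := Nat.mul_le_mul_left d hcon
        omega
      · intro x hx y hy hxy
        simp only [Finset.mem_coe, Set.Finite.mem_toFinset] at hx hy
        have hdx : d ∣ x % e := (Nat.dvd_mod_iff hde).mpr (hdvd x hx.1)
        have hdy : d ∣ y % e := (Nat.dvd_mod_iff hde).mpr (hdvd y hy.1)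
        have hxy' : x % e / d = y % e / d := hxy
        have : x % e = y % e := by
          rw [← Nat.div_mul_cancel hdx, ← Nat.div_mul_cancel hdy, hxy']
        exact hinj hx hy this
    simpa using hle
end

section
/- Let a and b be natural numbers with a > 0 and b > 0. Then a and b are relatively prime if and only if there exist r, s ∈ ℕ with (a − 1)·(b − 1) = r·a + s·b. -/
/-- For natural numbers `a, b > 0`: `a` and `b` are relatively
prime iff there exist `r, s ∈ ℕ` with `(a - 1) * (b - 1) = r * a + s * b`. -/
theorem stmt16 (a b : ℕ) (ha : 0 < a) (hb : 0 < b) :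
    Nat.gcd a b = 1 ↔ ∃ r s : ℕ, (a - 1) * (b - 1) = r * a + s * b := by
  constructor
  · intro hcop
    rcases eq_or_lt_of_le (show 1 ≤ a from ha) with h1 | ha1
    · exact ⟨0, 0, by simp [← h1]⟩
    rcases eq_or_lt_of_le (show 1 ≤ b from hb) with h1 | hb1
    · exact ⟨0, 0, by simp [← h1]⟩
    have hfrob := frobeniusNumber_pair hcop ha1 hb1
    have hgt : a * b - a - b < (a - 1) * (b - 1) := by
      cases' a with a; · omega
      cases' b with b; · omega
      have e : (a + 1) * (b + 1) = a * b + a + b + 1 := by ring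
      have e2 : (a + 1 - 1) * (b + 1 - 1) = a * b := by simp
      have hab : 1 ≤ a * b :=
        Nat.one_le_iff_ne_zero.mpr (Nat.mul_ne_zero (by omega) (by omega))
      rw [e2]
      omega
    have hmem : (a - 1) * (b - 1) ∈ AddSubmonoid.closure ({a, b} : Set ℕ) := by
      by_contra hcon
      exact absurd (hfrob.2 hcon) (not_le.mpr hgt)
    rw [AddSubmonoid.mem_closure_pair] at hmem
    obtain ⟨r, s, hrs⟩ := hmem
    exact ⟨r, s, by simpa [mul_comm] using hrs.symm⟩
  · rintro ⟨r, s, h⟩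
    have key : (a - 1) * (b - 1) + a + b = a * b + 1 := by
      cases' a with a; · omega
      cases' b with b; · omega
      simp [Nat.succ_sub_one]
      ring
    have d := Nat.gcd_dvd_left a b
    have d' := Nat.gcd_dvd_right a b
    have h1 : Nat.gcd a b ∣ a * b + 1 := by
      rw [← key, h]
      exact Nat.dvd_add (Nat.dvd_add (Nat.dvd_add (Dvd.dvd.mul_left d r) (Dvd.dvd.mul_left d' s)) d) d'
    have h2 : Nat.gcd a b ∣ a * b := Dvd.dvd.mul_right d b
    have := Nat.dvd_sub h1 h2
    simpa using this
end

section
/- Let a and b be positive natural numbers, and let d > 1 be a natural number dividing both a and b. Then gcd(a, b) = d if and only if there exist r, s ∈ ℕ with d·(a/d − 1)·(b/d − 1) = r·a + s·b. -/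
theorem aux_rep {m n : ℕ} (cop : Nat.Coprime m n) (hm : 1 < m) (hn : 1 < n) :
    ∃ r s : ℕ, r * m + s * n = (m - 1) * (n - 1) := by
  have h := frobeniusNumber_pair cop hm hn
  have hmn : m + n ≤ m * n := Nat.add_le_mul hm hn
  have hgt : m * n - m - n < (m - 1) * (n - 1) := by
    have h1 : (m - 1) * (n - 1) = m * n - m - n + 1 := by
      cases m with
      | zero => omega
      | succ m' => cases n with
        | zero => omega
        | succ n' =>
          have e : (m'+1)*(n'+1) = m'*n' + m' + n' + 1 := by ring
          simp only [Nat.succ_sub_one]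
          omega
    omega
  have hmem : (m - 1) * (n - 1) ∈ AddSubmonoid.closure ({m, n} : Set ℕ) := by
    by_contra hc
    exact absurd (h.2 hc) (Nat.not_le.mpr hgt)
  rw [AddSubmonoid.mem_closure_pair] at hmem
  obtain ⟨r, s, hrs⟩ := hmem
  exact ⟨r, s, by simpa [smul_eq_mul] using hrs⟩

/-- For positive natural numbers `a, b` and `d > 1` dividing both
`a` and `b`: `gcd a b = d` iff there exist `r, s ∈ ℕ` with
`d * (a / d - 1) * (b / d - 1) = r * a + s * b`. -/
theorem stmt17 (a b d : ℕ) (ha : 0 < a) (hb : 0 < b) (hd : 1 < d)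
    (hda : d ∣ a) (hdb : d ∣ b) :
    Nat.gcd a b = d ↔ ∃ r s : ℕ, d * (a / d - 1) * (b / d - 1) = r * a + s * b := by
  obtain ⟨m, hm⟩ := hda
  obtain ⟨n, hn⟩ := hdb
  have hd0 : 0 < d := by omega
  have hma : a / d = m := by rw [hm]; exact Nat.mul_div_cancel_left m hd0
  have hnb : b / d = n := by rw [hn]; exact Nat.mul_div_cancel_left n hd0
  have hm0 : 0 < m := by
    rcases Nat.eq_zero_or_pos m with h | h
    · subst h; omega
    · exact h
  have hn0 : 0 < n := by
    rcases Nat.eq_zero_or_pos n with h | h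
    · subst h; omega
    · exact h
  have hgcd : Nat.gcd a b = d * Nat.gcd m n := by
    rw [hm, hn, Nat.gcd_mul_left]
  rw [hma, hnb]
  constructor
  · intro h
    have cop : Nat.Coprime m n := by
      have : d * Nat.gcd m n = d * 1 := by rw [← hgcd, h]; ring
      exact Nat.eq_of_mul_eq_mul_left hd0 this
    rcases Nat.lt_or_ge 1 m with h1m | h1m
    · rcases Nat.lt_or_ge 1 n with h1n | h1n
      · obtain ⟨r, s, hrs⟩ := aux_rep cop h1m h1n
        refine ⟨r, s, ?_⟩
        rw [hm, hn]
        calc d * (m - 1) * (n - 1) = d * ((m - 1) * (n - 1)) := by ring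
        _ = d * (r * m + s * n) := by rw [hrs]
        _ = r * (d * m) + s * (d * n) := by ring
      · have : n = 1 := by omega
        exact ⟨0, 0, by simp [this]⟩
    · have : m = 1 := by omega
      exact ⟨0, 0, by simp [this]⟩
  · rintro ⟨r, s, hrs⟩
    rw [hm, hn] at hrs
    have hrs' : (m - 1) * (n - 1) = r * m + s * n := by
      have : d * ((m - 1) * (n - 1)) = d * (r * m + s * n) := by
        calc d * ((m - 1) * (n - 1)) = d * (m - 1) * (n - 1) := by ring
        _ = r * (d * m) + s * (d * n) := hrs
        _ = d * (r * m + s * n) := by ring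
      exact Nat.eq_of_mul_eq_mul_left hd0 this
    set g := Nat.gcd m n with hg
    have hgm : g ∣ m := Nat.gcd_dvd_left m n
    have hgn : g ∣ n := Nat.gcd_dvd_right m n
    have h1 : g ∣ (m - 1) * (n - 1) := by
      rw [hrs']
      exact Dvd.dvd.add (Dvd.dvd.mul_left hgm r) (Dvd.dvd.mul_left hgn s)
    have hsum : (m - 1) * (n - 1) + m + n = m * n + 1 := by
      cases m with
      | zero => omega
      | succ m' => cases n with
        | zero => omega
        | succ n' =>
          have e : (m'+1)*(n'+1) = m'*n' + m' + n' + 1 := by ring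
          simp only [Nat.succ_sub_one]
          omega
    have h2 : g ∣ m * n + 1 := by
      rw [← hsum]
      exact (h1.add hgm).add hgn
    have h3 : g ∣ m * n := hgm.mul_right n
    have hg1 : g = 1 := Nat.eq_one_of_dvd_one (by
      have := Nat.dvd_sub h2 h3
      simpa using this)
    rw [hgcd, hg1, Nat.mul_one]
end

section
/- Let a and b be natural numbers, let d = gcd(a, b), and assume d < a and d < b (in particular a, b > 0 and d > 0). Let M be the additive submonoid of ℕ generated by {a, b} and set c = d·(a/d − 1)·(b/d − 1). Then c + n·d ∈ M for every n ∈ ℕ, while c − d ∉ M. In particular c is the footing of M: the elements of M that are ≥ c are exactly the numbers c + n·d for n ∈ ℕ. -/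
/-- Let `d = gcd a b` with `d < a` and `d < b`, let `M` be the
additive submonoid of `ℕ` generated by `{a, b}`, and set
`c = d * (a / d - 1) * (b / d - 1)`. Then `c + n * d ∈ M` for every `n`,
`c - d ∉ M`, and the elements of `M` that are `≥ c` are exactly the numbers
`c + n * d`; that is, `c` is the footing of `M`. -/
theorem stmt18 (a b d : ℕ) (hd : d = Nat.gcd a b) (hda : d < a) (hdb : d < b)
    (M : AddSubmonoid ℕ) (hM : M = AddSubmonoid.closure ({a, b} : Set ℕ))
    (c : ℕ) (hc : c = d * (a / d - 1) * (b / d - 1)) :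
    (∀ n : ℕ, c + n * d ∈ M) ∧
    c - d ∉ M ∧
    (∀ x : ℕ, (x ∈ M ∧ c ≤ x) ↔ ∃ n : ℕ, x = c + n * d) := by
  have ha0 : 0 < a := lt_of_le_of_lt (Nat.zero_le d) hda
  have hd0 : 0 < d := hd ▸ Nat.gcd_pos_of_pos_left b ha0
  set p := a / d with hp'
  set q := b / d with hq'
  have hap : a = d * p := by
    rw [hp', Nat.mul_div_cancel' (hd ▸ Nat.gcd_dvd_left a b)]
  have hbq : b = d * q := by
    rw [hq', Nat.mul_div_cancel' (hd ▸ Nat.gcd_dvd_right a b)]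
  have hp : 1 < p := by
    rcases Nat.lt_or_ge p 2 with h | h
    · interval_cases p <;> omega
    · omega
  have hq : 1 < q := by
    rcases Nat.lt_or_ge q 2 with h | h
    · interval_cases q <;> omega
    · omega
  have cop : Nat.Coprime p q := by
    rw [hp', hq', hd]
    exact Nat.coprime_div_gcd_div_gcd (hd ▸ hd0)
  obtain ⟨hF1, hF2⟩ := frobeniusNumber_pair cop hp hq
  have hpq : p + q ≤ p * q := Nat.add_le_mul hp hq
  have e1 : (p - 1) * (q - 1) = p * q - p - q + 1 := by
    have h3 : p ≤ p * q := le_trans (Nat.le_add_right p q) hpq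
    have h4 : q ≤ p * q - p := by omega
    zify [hp.le, hq.le, h3, h4]
    ring
  set K := p * q - p - q with hK
  have hcK : c = d * (K + 1) := by rw [hc, mul_assoc, e1]
  have memM : ∀ x : ℕ, x ∈ M ↔ ∃ u v : ℕ, d * (u * p + v * q) = x := by
    intro x
    rw [hM, AddSubmonoid.mem_closure_pair]
    constructor
    · rintro ⟨u, v, h⟩
      exact ⟨u, v, by simp only [smul_eq_mul] at h; rw [← h, hap, hbq]; ring⟩
    · rintro ⟨u, v, h⟩
      refine ⟨u, v, ?_⟩
      simp only [smul_eq_mul]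
      rw [hap, hbq, ← h]; ring
  have rep : ∀ k : ℕ, K < k → ∃ u v : ℕ, u * p + v * q = k := by
    intro k hk
    by_contra h
    push_neg at h
    have hk2 : k ∉ AddSubmonoid.closure ({p, q} : Set ℕ) := by
      rw [AddSubmonoid.mem_closure_pair]
      rintro ⟨u, v, huv⟩
      exact h u v (by simpa using huv)
    exact absurd (hF2 hk2) (by omega)
  have part1 : ∀ n : ℕ, c + n * d ∈ M := by
    intro n
    obtain ⟨u, v, huv⟩ := rep (K + 1 + n) (by omega)
    rw [memM]
    exact ⟨u, v, by rw [huv, hcK]; ring⟩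
  refine ⟨part1, ?_, ?_⟩
  · rw [memM]
    rintro ⟨u, v, huv⟩
    have hcd : c - d = d * K := by
      rw [hcK, Nat.mul_add, mul_one, Nat.add_sub_cancel]
    rw [hcd] at huv
    have : u * p + v * q = K := Nat.eq_of_mul_eq_mul_left hd0 huv
    apply hF1
    rw [AddSubmonoid.mem_closure_pair]
    exact ⟨u, v, by simpa using this⟩
  · intro x
    constructor
    · rintro ⟨hxM, hcx⟩
      rw [memM] at hxM
      obtain ⟨u, v, huv⟩ := hxM
      set m := u * p + v * q with hm
      have hKm : K + 1 ≤ m := by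
        rw [hcK] at hcx
        rw [← huv] at hcx
        exact Nat.le_of_mul_le_mul_left hcx hd0
      refine ⟨m - (K + 1), ?_⟩
      obtain ⟨t, ht⟩ : ∃ t, m = K + 1 + t := ⟨m - (K + 1), by omega⟩
      rw [← huv, hcK, show m - (K + 1) = t by omega, ht]
      ring
    · rintro ⟨n, rfl⟩
      exact ⟨part1 n, Nat.le_add_right _ _⟩
end

section
/- Let M be a nonzero additive submonoid of ℕ with period d, and let ∼_M be the Bourne congruence on ℕ: m ∼_M m' iff there exist a, b ∈ M with m + a = m' + b. Then the quotient additive monoid ℕ/∼_M is isomorphic, as an additive monoid, to ZMod d (the integers modulo d); in particular the quotient is an abelian group. -/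
/-- Let `M` be a nonzero additive submonoid of `ℕ` with period
`d` (the least positive difference of `M`) and let `∼_M` be the Bourne
congruence on `ℕ`: `m ∼_M m' ↔ ∃ a b ∈ M, m + a = m' + b`. Then the quotient
additive monoid `ℕ/∼_M` is isomorphic as an additive monoid to `ZMod d`. -/
theorem stmt19 (M : AddSubmonoid ℕ) (hM : M ≠ ⊥) (d : ℕ) (hd0 : 0 < d)
    (hdiff : ∃ a ∈ M, a ≠ 0 ∧ a + d ∈ M)
    (hmin : ∀ e : ℕ, 0 < e → (∃ a ∈ M, a ≠ 0 ∧ a + e ∈ M) → d ≤ e)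
    (c : AddCon ℕ)
    (hc : ∀ m m' : ℕ, c m m' ↔ ∃ a ∈ M, ∃ b ∈ M, m + a = m' + b) :
    Nonempty (c.Quotient ≃+ ZMod d) := by
  obtain ⟨a₀, ha₀, ha₀ne, ha₀d⟩ := hdiff
  -- every element of M is divisible by d
  have hdvd : ∀ x ∈ M, d ∣ x := by
    intro x hx
    by_contra h
    have hr : 0 < x % d := Nat.pos_of_ne_zero fun h0 => h (Nat.dvd_of_mod_eq_zero h0)
    set q := x / d with hq
    have hmem : q • (a₀ + d) ∈ M := M.nsmul_mem ha₀d q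
    have hb : a₀ + q * (a₀ + d) ∈ M := M.add_mem ha₀ (by simpa [smul_eq_mul] using hmem)
    have hbne : a₀ + q * (a₀ + d) ≠ 0 := by positivity
    have hbr : (a₀ + q * (a₀ + d)) + x % d ∈ M := by
      have : (a₀ + q * (a₀ + d)) + x % d = a₀ + q * a₀ + x := by
        have hdm : d * q + x % d = x := Nat.div_add_mod x d
        have h1 : q * (a₀ + d) = q * a₀ + q * d := by ring
        have h2 : q * d = d * q := Nat.mul_comm q d
        omega
      rw [this]
      exact M.add_mem (M.add_mem ha₀ (by simpa [smul_eq_mul] using M.nsmul_mem ha₀ q)) hx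
    have := hmin (x % d) hr ⟨_, hb, hbne, hbr⟩
    have := Nat.mod_lt x hd0
    omega
  -- half of the key equivalence
  have half : ∀ m m' : ℕ, m ≤ m' → m ≡ m' [MOD d] → c m m' := by
    intro m m' hle hmod
    obtain ⟨k, hk⟩ := (Nat.modEq_iff_dvd' hle).mp hmod
    rw [hc]
    refine ⟨k • (a₀ + d), M.nsmul_mem ha₀d k, k • a₀, M.nsmul_mem ha₀ k, ?_⟩
    simp only [smul_eq_mul]
    have : m' = m + d * k := by omega
    subst this
    ring
  have key : ∀ m m' : ℕ, c m m' ↔ (m : ZMod d) = (m' : ZMod d) := by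
    intro m m'
    rw [ZMod.natCast_eq_natCast_iff]
    constructor
    · intro h
      obtain ⟨a, ha, b, hb, hab⟩ := (hc m m').mp h
      obtain ⟨u, hu⟩ := hdvd a ha
      obtain ⟨v, hv⟩ := hdvd b hb
      have hz : (m : ℤ) + d * u = m' + d * v := by
        have : m + d * u = m' + d * v := by omega
        exact_mod_cast this
      rw [Nat.modEq_iff_dvd]
      exact ⟨u - v, by rw [mul_sub]; omega⟩
    · intro h
      rcases le_total m m' with hle | hle
      · exact half m m' hle h
      · exact c.symm (half m' m hle h.symm)
  haveI : NeZero d := ⟨hd0.ne'⟩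
  have hle : c ≤ AddCon.ker (Nat.castAddMonoidHom (ZMod d)) := by
    intro m m' h
    simpa [AddCon.ker_rel] using (key m m').mp h
  let f : c.Quotient →+ ZMod d := c.lift (Nat.castAddMonoidHom (ZMod d)) hle
  have hinj : Function.Injective f := by
    intro x y
    refine AddCon.induction_on₂ x y fun m m' h => ?_
    have : (m : ZMod d) = (m' : ZMod d) := by simpa [f] using h
    exact c.eq.mpr ((key m m').mpr this)
  have hsurj : Function.Surjective f := by
    intro z
    obtain ⟨m, rfl⟩ := ZMod.natCast_zmod_surjective (n := d) z
    exact ⟨(m : c.Quotient), by simp [f]⟩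
  exact ⟨AddEquiv.ofBijective f ⟨hinj, hsurj⟩⟩
end
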